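/- Failure of Fréchet differentiability and of the inverse function theorem in C^1_*: Let H be an infinite-dimensional separable real Hilbert space. Then: (i) there exists G ∈ C^1_*(H, H) which is infinitely Fréchet differentiable on H \ {0} but is not Fréchet differentiable at 0; (ii) there exists F ∈ C^1_*(H, H) with D¹F(0, ẋ) = ẋ for all ẋ ∈ H such that F is injective on no neighbourhood of 0, i.e. for every neighbourhood W of 0 there exist distinct points x₁, x₂ ∈ W with F(x₁) = F(x₂). -/

import Mathlib

open Filter

noncomputable section

/-- Directional derivative `D^j G(x, v^j)`: the `j`-th derivative at `t = 0` of
`t ↦ G(x + t v)`. -/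
def dirDeriv {X Y : Type*} [NormedAddCommGroup X] [NormedSpace ℝ X]
    [NormedAddCommGroup Y] [NormedSpace ℝ Y] (G : X → Y) (j : ℕ) (x v : X) : Y :=
  iteratedDeriv j (fun t : ℝ => G (x + t • v)) 0

/-- The class `C^m_*(U, Y)`. -/
def CmStar {X Y : Type*} [NormedAddCommGroup X] [NormedSpace ℝ X]
    [NormedAddCommGroup Y] [NormedSpace ℝ Y] (m : ℕ) (U : Set X) (G : X → Y) : Prop :=
  ContinuousOn G U ∧
    (∀ (x v : X) (j : ℕ), j < m → ∀ t : ℝ, x + t • v ∈ U →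
      DifferentiableAt ℝ (iteratedDeriv j fun s : ℝ => G (x + s • v)) t) ∧
    ∀ j : ℕ, j ≤ m → ContinuousOn (fun p : X × X => dirDeriv G j p.1 p.2) (U ×ˢ Set.univ)

namespace CmStarAux

open Metric Set

def aa (n : ℕ) : ℝ := (2:ℝ)⁻¹ ^ (2 ^ (n + 5))

def RR (n : ℕ) : ℝ := 2 ^ (n + 5) * aa n

lemma aa_pos (n : ℕ) : 0 < aa n := by unfold aa; positivity

lemma aa_succ (n : ℕ) : aa (n + 1) = aa n ^ 2 := by
  unfold aa
  rw [← pow_mul]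
  congr 1

lemma aa_anti : StrictAnti aa := by
  intro n m h
  unfold aa
  apply pow_lt_pow_right_of_lt_one₀ (by norm_num) (by norm_num)
  exact Nat.pow_lt_pow_right one_lt_two (by omega)

lemma two_pow_big (n : ℕ) : 2 * n + 16 ≤ 2 ^ (n + 5) := by
  have h1 : n < 2 ^ n := Nat.lt_two_pow_self
  have : 2 ^ (n + 5) = 32 * 2 ^ n := by rw [pow_add]; ring
  omega

lemma aa_le (n : ℕ) : aa n ≤ (2:ℝ)⁻¹ ^ (2 * n + 16) := by
  unfold aa
  exact pow_le_pow_of_le_one (by norm_num) (by norm_num) (two_pow_big n)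

lemma RR_pos (n : ℕ) : 0 < RR n := by
  have := aa_pos n; unfold RR; positivity

lemma aa_le_RR (n : ℕ) : aa n ≤ RR n := by
  have h := aa_pos n
  have h1 : (1:ℝ) ≤ 2 ^ (n + 5) := one_le_pow₀ (by norm_num)
  unfold RR; nlinarith

lemma halfpow_mul (k : ℕ) : (2:ℝ) ^ k * (2:ℝ)⁻¹ ^ k = 1 := by
  rw [← mul_pow]; norm_num

lemma RR_le (n : ℕ) : RR n ≤ (2:ℝ)⁻¹ ^ (n + 11) := by
  unfold RR
  have h := aa_le n
  have h2 : (2:ℝ)⁻¹ ^ (2 * n + 16) = (2:ℝ)⁻¹ ^ (n + 5) * (2:ℝ)⁻¹ ^ (n + 11) := by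
    rw [← pow_add]; congr 1; ring
  have h3 : (0:ℝ) ≤ 2 ^ (n + 5) := by positivity
  calc (2:ℝ) ^ (n + 5) * aa n ≤ 2 ^ (n + 5) * ((2:ℝ)⁻¹ ^ (n + 5) * (2:ℝ)⁻¹ ^ (n + 11)) := by
        rw [← h2]; exact mul_le_mul_of_nonneg_left h h3
    _ = (2:ℝ)⁻¹ ^ (n + 11) := by rw [← mul_assoc, halfpow_mul, one_mul]

lemma sparsity {n m : ℕ} (h : n < m) : 2 * RR m < aa n / 2 := by
  obtain ⟨k, rfl⟩ : ∃ k, m = k + 1 := ⟨m - 1, by omega⟩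
  have hnk : n ≤ k := by omega
  have hank : aa k ≤ aa n := aa_anti.antitone hnk
  have hk := aa_pos k
  -- 2 * RR (k+1) = 2^(k+7) * aa k ^2 < aa k / 2  ⇔ aa k < (2⁻¹)^(k+8)
  have key : aa k < (2:ℝ)⁻¹ ^ (k + 8) := by
    calc aa k ≤ (2:ℝ)⁻¹ ^ (2 * k + 16) := aa_le k
      _ < (2:ℝ)⁻¹ ^ (k + 8) := by
          apply pow_lt_pow_right_of_lt_one₀ (by norm_num) (by norm_num)
          omega
  have h28 : (2:ℝ) ^ (k + 8) * (2:ℝ)⁻¹ ^ (k + 8) = 1 := halfpow_mul _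
  have key2 : (2:ℝ) ^ (k + 8) * aa k < 1 := by
    calc (2:ℝ) ^ (k + 8) * aa k < 2 ^ (k + 8) * (2:ℝ)⁻¹ ^ (k + 8) := by
          apply mul_lt_mul_of_pos_left key (by positivity)
      _ = 1 := h28
  have expand : 2 * RR (k + 1) = (2:ℝ) ^ (k + 7) * (aa k * aa k) := by
    unfold RR
    rw [aa_succ]
    have : (2:ℝ) ^ (k + 1 + 5) * (aa k ^ 2) = 2 ^ (k + 6) * (aa k * aa k) := by
      rw [show k + 1 + 5 = k + 6 by ring]; ring
    rw [this, pow_succ]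
    ring
  rw [expand]
  have h7 : (2:ℝ) ^ (k + 8) = 2 ^ (k + 7) * 2 := by rw [pow_succ]
  -- goal : 2^(k+7) * (aa k * aa k) < aa n / 2
  have : (2:ℝ) ^ (k + 7) * (aa k * aa k) < aa k / 2 := by
    rw [h7] at key2
    nlinarith [aa_pos k]
  calc (2:ℝ) ^ (k + 7) * (aa k * aa k) < aa k / 2 := this
    _ ≤ aa n / 2 := by linarith

lemma aa_ratio (n : ℕ) : aa n / RR n = ((2:ℝ) ^ (n + 5))⁻¹ := by
  unfold RR
  rw [div_mul_eq_div_div_swap, div_self (ne_of_gt (aa_pos n)), one_div]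

lemma aa_tendsto : Tendsto aa atTop (nhds 0) := by
  apply squeeze_zero (fun n => (aa_pos n).le) (fun n => ?_)
    (tendsto_pow_atTop_nhds_zero_of_lt_one (by norm_num : (0:ℝ) ≤ 2⁻¹) (by norm_num))
  calc aa n ≤ (2:ℝ)⁻¹ ^ (2 * n + 16) := aa_le n
    _ ≤ (2:ℝ)⁻¹ ^ n := pow_le_pow_of_le_one (by norm_num) (by norm_num) (by omega)


lemma RR_ge (n : ℕ) : 32 * aa n ≤ RR n := by
  have ha := aa_pos n
  have h32 : (32:ℝ) ≤ 2 ^ (n + 5) := by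
    calc (32:ℝ) = 2 ^ 5 := by norm_num
      _ ≤ 2 ^ (n + 5) := pow_le_pow_right₀ (by norm_num) (by omega)
  unfold RR
  nlinarith

/-- the radial cutoff: `1` on `[-1,1]`, supported in `(-2,2)` -/
def chiB : ContDiffBump (0:ℝ) := ⟨1, 2, one_pos, one_lt_two⟩

def chi : ℝ → ℝ := ⇑chiB

lemma chi_contDiff : ContDiff ℝ (⊤:ℕ∞) chi := chiB.contDiff

lemma chi_one {q : ℝ} (h : |q| ≤ 1) : chi q = 1 :=
  chiB.one_of_mem_closedBall (by simpa [Real.dist_eq, chiB] using h)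

lemma chi_nonneg (q : ℝ) : 0 ≤ chi q := chiB.nonneg

lemma chi_le_one (q : ℝ) : chi q ≤ 1 := chiB.le_one

lemma chi_ne {q : ℝ} (h : chi q ≠ 0) : |q| < 2 := by
  have := Function.mem_support.2 h
  rw [chi, chiB.support_eq] at this
  simpa [Real.dist_eq, chiB] using this

lemma chi_deriv_ne {q : ℝ} (h : deriv chi q ≠ 0) : |q| ≤ 2 := by
  have := support_deriv_subset (Function.mem_support.2 h)
  rw [chi, chiB.tsupport_eq] at this
  simpa [Real.dist_eq, chiB] using this

lemma chi_hcs : HasCompactSupport chi := chiB.hasCompactSupport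

lemma chi_deriv_bound : ∃ C : ℝ, 0 ≤ C ∧ ∀ q, |deriv chi q| ≤ C := by
  obtain ⟨C, hC⟩ := (chi_contDiff.continuous_deriv (by norm_num)).bounded_above_of_compact_support
    chi_hcs.deriv
  exact ⟨C, le_trans (abs_nonneg _) (by simpa using hC 0), by simpa using hC⟩

def Kchi : ℝ := chi_deriv_bound.choose

lemma Kchi_nonneg : 0 ≤ Kchi := chi_deriv_bound.choose_spec.1

lemma Kchi_bound (q : ℝ) : |deriv chi q| ≤ Kchi := chi_deriv_bound.choose_spec.2 q

variable {H : Type*} [NormedAddCommGroup H] [InnerProductSpace ℝ H]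

/-- The data for our bump-sum constructions. -/
structure Setup (H : Type*) [NormedAddCommGroup H] [InnerProductSpace ℝ H] : Type _ where
  e : ℕ → H
  he : Orthonormal ℝ e
  u : ℝ → ℝ
  hu : ContDiff ℝ (⊤:ℕ∞) u
  husupp : ∀ y : ℝ, y ∉ Icc (1/2 : ℝ) (3/2) → u y = 0
  Ku : ℝ
  Ku' : ℝ
  hKu : ∀ y, |u y| ≤ Ku
  hKu' : ∀ y, |deriv u y| ≤ Ku'
  w : ℕ → H
  hw : ∀ n, ‖w n‖ ≤ 1

namespace Setup

variable (P : Setup H)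

def SS (n : ℕ) (x : H) : ℝ :=
  aa n * P.u (inner ℝ x (P.e n) / aa n) * chi (‖x‖ ^ 2 / RR n ^ 2)

def DS (n : ℕ) (x v : H) : ℝ :=
  (inner ℝ v (P.e n) : ℝ) * deriv P.u (inner ℝ x (P.e n) / aa n) * chi (‖x‖ ^ 2 / RR n ^ 2)
    + aa n * P.u (inner ℝ x (P.e n) / aa n) * deriv chi (‖x‖ ^ 2 / RR n ^ 2)
      * (2 * inner ℝ x v / RR n ^ 2)

def Phi (x : H) : H := ∑' n, P.SS n x • P.w n

def Psi (x v : H) : H := ∑' n, P.DS n x v • P.w n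

/-- activity predicate -/
def Act (n : ℕ) (x : H) : Prop :=
  aa n / 2 ≤ (inner ℝ x (P.e n) : ℝ) ∧ ‖x‖ ^ 2 ≤ 2 * RR n ^ 2

lemma Ku_nonneg : 0 ≤ P.Ku := le_trans (abs_nonneg _) (P.hKu 0)
lemma Ku'_nonneg : 0 ≤ P.Ku' := le_trans (abs_nonneg _) (P.hKu' 0)

lemma u_ne {y : ℝ} (h : P.u y ≠ 0) : y ∈ Icc (1/2 : ℝ) (3/2) := by
  by_contra hy; exact h (P.husupp y hy)

lemma husupp' : Function.support P.u ⊆ Icc (1/2 : ℝ) (3/2) := fun y hy => P.u_ne hy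

lemma du_ne {y : ℝ} (h : deriv P.u y ≠ 0) : y ∈ Icc (1/2 : ℝ) (3/2) := by
  have h1 : y ∈ tsupport P.u := support_deriv_subset (Function.mem_support.2 h)
  exact closure_minimal P.husupp' isClosed_Icc h1

lemma u_zero_zero : P.u 0 = 0 := P.husupp 0 (by norm_num)
lemma du_zero_zero : deriv P.u 0 = 0 := by
  by_contra h
  have := P.du_ne h
  simp at this; norm_num at this

lemma norm_e (n : ℕ) : ‖P.e n‖ = 1 := P.he.1 n

lemma act_of_parts {n : ℕ} {x : H}
    (h1 : (inner ℝ x (P.e n) : ℝ) / aa n ∈ Icc (1/2 : ℝ) (3/2))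
    (h2 : |‖x‖ ^ 2 / RR n ^ 2| ≤ 2) : P.Act n x := by
  have ha := aa_pos n
  have hR := RR_pos n
  constructor
  · have := h1.1
    rw [le_div_iff₀ ha] at this
    linarith
  · have h2' : ‖x‖ ^ 2 / RR n ^ 2 ≤ 2 := le_trans (le_abs_self _) h2
    rw [div_le_iff₀ (by positivity)] at h2'
    linarith

lemma SS_ne {n : ℕ} {x : H} (h : P.SS n x ≠ 0) : P.Act n x := by
  unfold SS at h
  have hu : P.u (inner ℝ x (P.e n) / aa n) ≠ 0 := fun h0 => h (by rw [h0]; ring)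
  have hc : chi (‖x‖ ^ 2 / RR n ^ 2) ≠ 0 := fun h0 => h (by rw [h0]; ring)
  exact P.act_of_parts (P.u_ne hu) (chi_ne hc).le

lemma DS_ne {n : ℕ} {x v : H} (h : P.DS n x v ≠ 0) : P.Act n x := by
  unfold DS at h
  set y := (inner ℝ x (P.e n) : ℝ) / aa n
  set q := ‖x‖ ^ 2 / RR n ^ 2
  rcases ne_or_eq ((inner ℝ v (P.e n) : ℝ) * deriv P.u y * chi q) 0 with h1 | h1
  · have hdu : deriv P.u y ≠ 0 := fun h0 => h1 (by rw [h0]; ring)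
    have hc : chi q ≠ 0 := fun h0 => h1 (by rw [h0]; ring)
    exact P.act_of_parts (P.du_ne hdu) (chi_ne hc).le
  · have h2 : aa n * P.u y * deriv chi q * (2 * inner ℝ x v / RR n ^ 2) ≠ 0 := by
      intro h0; rw [h1, h0, zero_add] at h; exact h rfl
    have hu : P.u y ≠ 0 := fun h0 => h2 (by rw [h0]; ring)
    have hc : deriv chi q ≠ 0 := fun h0 => h2 (by rw [h0]; ring)
    exact P.act_of_parts (P.u_ne hu) (chi_deriv_ne hc)

lemma act_norm {n : ℕ} {x : H} (h : P.Act n x) : aa n ≤ 2 * ‖x‖ ∧ ‖x‖ ≤ 2 * RR n := by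
  obtain ⟨h1, h2⟩ := h
  have ha := aa_pos n
  have hR := RR_pos n
  have hin : (inner ℝ x (P.e n) : ℝ) ≤ ‖x‖ := by
    calc (inner ℝ x (P.e n) : ℝ) ≤ ‖x‖ * ‖P.e n‖ := real_inner_le_norm _ _
      _ = ‖x‖ := by rw [P.norm_e, mul_one]
  constructor
  · linarith
  · nlinarith [norm_nonneg x]

lemma act_unique {n m : ℕ} {x : H} (hn : P.Act n x) (hm : P.Act m x) : n = m := by
  by_contra hne
  rcases Nat.lt_or_ge n m with h | h
  · have h1 := (P.act_norm hn).1
    have h2 := (P.act_norm hm).2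
    have := sparsity h
    linarith
  · have h' : m < n := by omega
    have h1 := (P.act_norm hm).1
    have h2 := (P.act_norm hn).2
    have := sparsity h'
    linarith

lemma exists_good (x : H) : ∃ n, ∀ m, m ≠ n → ¬ P.Act m x := by
  by_cases h : ∃ k, P.Act k x
  · obtain ⟨k, hk⟩ := h
    exact ⟨k, fun m hm hAct => hm (P.act_unique hAct hk)⟩
  · exact ⟨0, fun m _ hAct => h ⟨m, hAct⟩⟩

lemma Phi_eq_single {x : H} {n : ℕ} (h : ∀ m, m ≠ n → ¬ P.Act m x) :
    P.Phi x = P.SS n x • P.w n := by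
  apply tsum_eq_single
  intro m hm
  have : P.SS m x = 0 := by
    by_contra h0; exact h m hm (P.SS_ne h0)
  rw [this, zero_smul]

lemma Psi_eq_single {x v : H} {n : ℕ} (h : ∀ m, m ≠ n → ¬ P.Act m x) :
    P.Psi x v = P.DS n x v • P.w n := by
  apply tsum_eq_single
  intro m hm
  have : P.DS m x v = 0 := by
    by_contra h0; exact h m hm (P.DS_ne h0)
  rw [this, zero_smul]

lemma DS_zero (n : ℕ) (v : H) : P.DS n 0 v = 0 := by
  unfold DS
  simp [P.u_zero_zero, P.du_zero_zero]

lemma Psi_zero_left (v : H) : P.Psi 0 v = 0 := by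
  unfold Psi
  simp [P.DS_zero]

/-- derivative of a single term along a line -/
lemma hasDerivAt_SS (n : ℕ) (x v : H) (t₀ : ℝ) :
    HasDerivAt (fun t : ℝ => P.SS n (x + t • v)) (P.DS n (x + t₀ • v) v) t₀ := by
  have ha := (aa_pos n).ne'
  have hR := (RR_pos n).ne'
  -- inner ℝ coordinate along the line
  have hline : ∀ t : ℝ, (inner ℝ (x + t • v) (P.e n) : ℝ) / aa n
      = ((inner ℝ x (P.e n) : ℝ) + t * (inner ℝ v (P.e n) : ℝ)) / aa n := by
    intro t
    rw [inner_add_left, real_inner_smul_left]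
  have h1 : HasDerivAt (fun t : ℝ => (inner ℝ (x + t • v) (P.e n) : ℝ) / aa n)
      ((inner ℝ v (P.e n) : ℝ) / aa n) t₀ := by
    rw [funext hline]
    exact ((hasDerivAt_mul_const ((inner ℝ v (P.e n) : ℝ))).const_add
      ((inner ℝ x (P.e n) : ℝ))).div_const (aa n)
  -- the radial coordinate along the line
  have hq : ∀ t : ℝ, ‖x + t • v‖ ^ 2 / RR n ^ 2
      = (‖x‖ ^ 2 + 2 * (inner ℝ x v : ℝ) * t + ‖v‖ ^ 2 * t ^ 2) / RR n ^ 2 := by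
    intro t
    rw [norm_add_sq_real, real_inner_smul_right, norm_smul]
    simp [Real.norm_eq_abs, mul_pow, sq_abs]
    ring
  have h2 : HasDerivAt (fun t : ℝ => ‖x + t • v‖ ^ 2 / RR n ^ 2)
      (2 * (inner ℝ (x + t₀ • v) v : ℝ) / RR n ^ 2) t₀ := by
    rw [funext hq]
    have hp : HasDerivAt (fun t : ℝ => ‖x‖ ^ 2 + 2 * (inner ℝ x v : ℝ) * t + ‖v‖ ^ 2 * t ^ 2)
        (2 * (inner ℝ x v : ℝ) + ‖v‖ ^ 2 * (2 * t₀)) t₀ := by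
      have hh0 : HasDerivAt (fun t : ℝ => 2 * (inner ℝ x v : ℝ) * t)
          (2 * (inner ℝ x v : ℝ)) t₀ := by
        simpa using (hasDerivAt_id t₀).const_mul (2 * (inner ℝ x v : ℝ))
      have hh1 : HasDerivAt (fun t : ℝ => ‖x‖ ^ 2 + 2 * (inner ℝ x v : ℝ) * t)
          (2 * (inner ℝ x v : ℝ)) t₀ := hh0.const_add _
      have hh2 : HasDerivAt (fun t : ℝ => ‖v‖ ^ 2 * t ^ 2) (‖v‖ ^ 2 * (2 * t₀)) t₀ := by
        have := (hasDerivAt_pow 2 t₀).const_mul (‖v‖ ^ 2)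
        simpa using this
      exact hh1.add hh2
    have hval : 2 * (inner ℝ (x + t₀ • v) v : ℝ) = 2 * (inner ℝ x v : ℝ) + ‖v‖ ^ 2 * (2 * t₀) := by
      rw [inner_add_left, real_inner_smul_left, real_inner_self_eq_norm_sq]
      ring
    rw [hval]
    exact hp.div_const _
  -- assemble by product/chain rule
  have hu' : HasDerivAt (fun t : ℝ => P.u ((inner ℝ (x + t • v) (P.e n) : ℝ) / aa n))
      (deriv P.u ((inner ℝ (x + t₀ • v) (P.e n) : ℝ) / aa n) * ((inner ℝ v (P.e n) : ℝ) / aa n)) t₀ := by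
    have hdu : HasDerivAt P.u (deriv P.u ((inner ℝ (x + t₀ • v) (P.e n) : ℝ) / aa n))
        ((inner ℝ (x + t₀ • v) (P.e n) : ℝ) / aa n) :=
      (P.hu.differentiable (by simp) _).hasDerivAt
    exact hdu.comp t₀ h1
  have hchi' : HasDerivAt (fun t : ℝ => chi (‖x + t • v‖ ^ 2 / RR n ^ 2))
      (deriv chi (‖x + t₀ • v‖ ^ 2 / RR n ^ 2) * (2 * (inner ℝ (x + t₀ • v) v : ℝ) / RR n ^ 2)) t₀ := by
    have hdc : HasDerivAt chi (deriv chi (‖x + t₀ • v‖ ^ 2 / RR n ^ 2))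
        (‖x + t₀ • v‖ ^ 2 / RR n ^ 2) :=
      (chi_contDiff.differentiable (by simp) _).hasDerivAt
    exact hdc.comp t₀ h2
  have hfull := ((hu'.const_mul (aa n)).mul hchi')
  have : HasDerivAt (fun t : ℝ => P.SS n (x + t • v)) _ t₀ := hfull
  refine this.congr_deriv ?_
  unfold DS
  field_simp


lemma SS_abs_le (n : ℕ) (x : H) : |P.SS n x| ≤ aa n * P.Ku := by
  unfold SS
  rw [abs_mul, abs_mul, abs_of_pos (aa_pos n), abs_of_nonneg (chi_nonneg _)]
  calc aa n * |P.u (inner ℝ x (P.e n) / aa n)| * chi (‖x‖ ^ 2 / RR n ^ 2)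
      ≤ aa n * P.Ku * 1 := by
        apply mul_le_mul _ (chi_le_one _) (chi_nonneg _)
          (mul_nonneg (aa_pos n).le P.Ku_nonneg)
        exact mul_le_mul_of_nonneg_left (P.hKu _) (aa_pos n).le
    _ = aa n * P.Ku := mul_one _

lemma Phi_norm_le (x : H) : ‖P.Phi x‖ ≤ 2 * P.Ku * ‖x‖ := by
  obtain ⟨n, hn⟩ := P.exists_good x
  rw [P.Phi_eq_single hn]
  by_cases h : P.SS n x = 0
  · rw [h, zero_smul, norm_zero]
    have := P.Ku_nonneg; positivity
  · have hact := P.act_norm (P.SS_ne h)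
    calc ‖P.SS n x • P.w n‖ = |P.SS n x| * ‖P.w n‖ := by
          rw [norm_smul, Real.norm_eq_abs]
      _ ≤ |P.SS n x| * 1 := mul_le_mul_of_nonneg_left (P.hw n) (abs_nonneg _)
      _ = |P.SS n x| := mul_one _
      _ ≤ aa n * P.Ku := P.SS_abs_le n x
      _ ≤ (2 * ‖x‖) * P.Ku := mul_le_mul_of_nonneg_right hact.1 P.Ku_nonneg
      _ = 2 * P.Ku * ‖x‖ := by ring

lemma DS_abs_le {n : ℕ} {x v : H} (h : P.Act n x) :
    |P.DS n x v| ≤ P.Ku' * |(inner ℝ v (P.e n) : ℝ)| + 8 * P.Ku * Kchi * (2:ℝ)⁻¹ ^ n * ‖v‖ := by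
  have ha := aa_pos n
  have hR := RR_pos n
  have hxR := (P.act_norm h).2
  have hKu := P.Ku_nonneg
  have hKu' := P.Ku'_nonneg
  have hKc := Kchi_nonneg
  unfold DS
  apply le_trans (abs_add_le _ _)
  have t1 : |(inner ℝ v (P.e n) : ℝ) * deriv P.u (inner ℝ x (P.e n) / aa n) * chi (‖x‖ ^ 2 / RR n ^ 2)|
      ≤ P.Ku' * |(inner ℝ v (P.e n) : ℝ)| := by
    rw [abs_mul, abs_mul, abs_of_nonneg (chi_nonneg _)]
    calc |(inner ℝ v (P.e n) : ℝ)| * |deriv P.u (inner ℝ x (P.e n) / aa n)| * chi (‖x‖ ^ 2 / RR n ^ 2)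
        ≤ |(inner ℝ v (P.e n) : ℝ)| * P.Ku' * 1 := by
          apply mul_le_mul _ (chi_le_one _) (chi_nonneg _)
            (mul_nonneg (abs_nonneg _) P.Ku'_nonneg)
          exact mul_le_mul_of_nonneg_left (P.hKu' _) (abs_nonneg _)
      _ = P.Ku' * |(inner ℝ v (P.e n) : ℝ)| := by ring
  have t2 : |aa n * P.u (inner ℝ x (P.e n) / aa n) * deriv chi (‖x‖ ^ 2 / RR n ^ 2)
      * (2 * inner ℝ x v / RR n ^ 2)| ≤ 8 * P.Ku * Kchi * (2:ℝ)⁻¹ ^ n * ‖v‖ := by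
    rw [abs_mul, abs_mul, abs_mul, abs_of_pos ha]
    have h4 : |2 * (inner ℝ x v : ℝ) / RR n ^ 2| ≤ 4 * ‖v‖ / RR n := by
      rw [abs_div, abs_of_pos (by positivity : (0:ℝ) < RR n ^ 2), abs_mul,
        abs_of_pos (by norm_num : (0:ℝ) < 2)]
      rw [div_le_div_iff₀ (by positivity) hR]
      have hxv : |(inner ℝ x v : ℝ)| ≤ ‖x‖ * ‖v‖ := abs_real_inner_le_norm x v
      have hnv := norm_nonneg v
      have hxx : ‖x‖ * ‖v‖ ≤ (2 * RR n) * ‖v‖ := mul_le_mul_of_nonneg_right hxR hnv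
      calc 2 * |(inner ℝ x v : ℝ)| * RR n ≤ 2 * ((2 * RR n) * ‖v‖) * RR n := by
            apply mul_le_mul_of_nonneg_right _ hR.le
            nlinarith
        _ = 4 * ‖v‖ * RR n ^ 2 := by ring
    calc aa n * |P.u (inner ℝ x (P.e n) / aa n)| * |deriv chi (‖x‖ ^ 2 / RR n ^ 2)|
          * |2 * (inner ℝ x v : ℝ) / RR n ^ 2|
        ≤ aa n * P.Ku * Kchi * (4 * ‖v‖ / RR n) := by
          apply mul_le_mul _ h4 (abs_nonneg _) (by positivity)
          apply mul_le_mul _ (Kchi_bound _) (abs_nonneg _) (by positivity)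
          exact mul_le_mul_of_nonneg_left (P.hKu _) ha.le
      _ = 4 * P.Ku * Kchi * (aa n / RR n) * ‖v‖ := by ring
      _ ≤ 8 * P.Ku * Kchi * (2:ℝ)⁻¹ ^ n * ‖v‖ := by
          have h5 : aa n / RR n ≤ (2:ℝ)⁻¹ ^ n := by
            rw [aa_ratio, ← inv_pow]
            exact pow_le_pow_of_le_one (by norm_num) (by norm_num) (by omega)
          have h6 : (0:ℝ) ≤ (2:ℝ)⁻¹ ^ n := by positivity
          have hc4 : (0:ℝ) ≤ 4 * P.Ku * Kchi := by nlinarith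
          have step1 : 4 * P.Ku * Kchi * (aa n / RR n) * ‖v‖
              ≤ 4 * P.Ku * Kchi * ((2:ℝ)⁻¹ ^ n) * ‖v‖ := by
            apply mul_le_mul_of_nonneg_right _ (norm_nonneg v)
            exact mul_le_mul_of_nonneg_left h5 hc4
          have step2 : (0:ℝ) ≤ 4 * P.Ku * Kchi * ((2:ℝ)⁻¹ ^ n) * ‖v‖ :=
            mul_nonneg (mul_nonneg hc4 h6) (norm_nonneg v)
          linarith
  linarith

lemma locfin {x₀ : H} (hx : x₀ ≠ 0) :
    ∃ N : ℕ, ∀ x : H, dist x x₀ < ‖x₀‖ / 2 → ∀ n, N ≤ n → ¬ P.Act n x := by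
  obtain ⟨N, hN⟩ := exists_pow_lt_of_lt_one (show (0:ℝ) < ‖x₀‖ / 8 by
    have := norm_pos_iff.2 hx; linarith) (show (2:ℝ)⁻¹ < 1 by norm_num)
  refine ⟨N, fun x hdist n hn hact => ?_⟩
  have hx0 : (0:ℝ) < ‖x₀‖ := norm_pos_iff.2 hx
  have h1 : ‖x‖ ≤ 2 * RR n := (P.act_norm hact).2
  have h2 : RR n ≤ (2:ℝ)⁻¹ ^ N := by
    calc RR n ≤ (2:ℝ)⁻¹ ^ (n + 11) := RR_le n
      _ ≤ (2:ℝ)⁻¹ ^ N := pow_le_pow_of_le_one (by norm_num) (by norm_num) (by omega)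
  have h3 : ‖x₀‖ - ‖x‖ ≤ dist x x₀ := by
    rw [dist_eq_norm]
    calc ‖x₀‖ - ‖x‖ ≤ ‖x₀ - x‖ := by
          have := norm_sub_norm_le x₀ x; linarith
      _ = ‖x - x₀‖ := by rw [norm_sub_rev]
  linarith

lemma SS_contDiff (n : ℕ) : ContDiff ℝ (⊤:ℕ∞) (P.SS n) := by
  have h1 : ContDiff ℝ (⊤:ℕ∞) (fun x : H => (inner ℝ x (P.e n) : ℝ) / aa n) := by
    have heq : (fun x : H => (inner ℝ x (P.e n) : ℝ) / aa n)
        = fun x : H => (inner ℝ (P.e n) x : ℝ) / aa n := by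
      funext x; rw [real_inner_comm]
    rw [heq]
    exact ((innerSL ℝ (P.e n)).contDiff).div_const _
  have h2 : ContDiff ℝ (⊤:ℕ∞) (fun x : H => ‖x‖ ^ 2 / RR n ^ 2) :=
    (contDiff_norm_sq ℝ).div_const _
  exact (contDiff_const.mul (P.hu.comp h1)).mul (chi_contDiff.comp h2)

lemma DS_cont (n : ℕ) : Continuous (fun p : H × H => P.DS n p.1 p.2) := by
  have hinner : Continuous (fun p : H × H => (inner ℝ p.1 (P.e n) : ℝ) / aa n) :=
    (continuous_fst.inner continuous_const).div_const _
  have hq : Continuous (fun p : H × H => ‖p.1‖ ^ 2 / RR n ^ 2) :=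
    (((continuous_norm.comp continuous_fst).pow 2)).div_const _
  have h1 : Continuous (fun p : H × H => (inner ℝ p.2 (P.e n) : ℝ)) :=
    continuous_snd.inner continuous_const
  have hone : (1:ℕ∞) ≤ (⊤:ℕ∞) := le_top
  have h2 : Continuous (deriv P.u) := P.hu.continuous_deriv (by exact_mod_cast hone)
  have h3 : Continuous (deriv chi) := chi_contDiff.continuous_deriv (by exact_mod_cast hone)
  have h4 : Continuous (fun p : H × H => (inner ℝ p.1 p.2 : ℝ)) :=
    continuous_fst.inner continuous_snd
  have hchi : Continuous chi := chi_contDiff.continuous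
  unfold DS
  exact ((h1.mul (h2.comp hinner)).mul (hchi.comp hq)).add
    (((continuous_const.mul (P.hu.continuous.comp hinner)).mul (h3.comp hq)).mul
      ((continuous_const.mul h4).div_const _))

lemma Phi_zero : P.Phi 0 = 0 := by
  have h := P.Phi_norm_le 0
  simp only [norm_zero, mul_zero] at h
  exact norm_le_zero_iff.1 h

lemma inner_tendsto (y : H) :
    Tendsto (fun n => (inner ℝ y (P.e n) : ℝ)) atTop (nhds 0) := by
  have hsum : Summable (fun n => ‖(inner ℝ (P.e n) y : ℝ)‖ ^ 2) :=
    Orthonormal.inner_products_summable y P.he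
  have h0 := hsum.tendsto_atTop_zero
  have h1 : Tendsto (fun n => ‖(inner ℝ (P.e n) y : ℝ)‖) atTop (nhds 0) := by
    have h2 := (Real.continuous_sqrt.tendsto 0).comp h0
    simp only [Real.sqrt_zero] at h2
    convert h2 using 2 with n
    simp [Function.comp, Real.sqrt_sq_eq_abs]
  have h3 : Tendsto (fun n => (inner ℝ (P.e n) y : ℝ)) atTop (nhds 0) :=
    tendsto_zero_iff_norm_tendsto_zero.2 h1
  convert h3 using 2 with n
  exact real_inner_comm _ _

lemma abs_inner_e_le (n : ℕ) (y : H) : |(inner ℝ y (P.e n) : ℝ)| ≤ ‖y‖ := by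
  calc |(inner ℝ y (P.e n) : ℝ)| ≤ ‖y‖ * ‖P.e n‖ := abs_real_inner_le_norm _ _
    _ = ‖y‖ := by rw [P.norm_e, mul_one]

/-- eventually (near a nonzero point) both sums are finite sums -/
lemma eventually_finite_rep {x₀ : H} (hx : x₀ ≠ 0) :
    ∃ N : ℕ, ∀ᶠ x in nhds x₀,
      (P.Phi x = ∑ n ∈ Finset.range N, P.SS n x • P.w n) ∧
      (∀ v, P.Psi x v = ∑ n ∈ Finset.range N, P.DS n x v • P.w n) := by
  obtain ⟨N, hN⟩ := P.locfin hx
  refine ⟨N, ?_⟩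
  have hball : ∀ᶠ x in nhds x₀, dist x x₀ < ‖x₀‖ / 2 := by
    have hpos : (0:ℝ) < ‖x₀‖ / 2 := by
      have := norm_pos_iff.2 hx; linarith
    filter_upwards [Metric.ball_mem_nhds x₀ hpos] with x hx'
    exact mem_ball.1 hx'
  filter_upwards [hball] with x hxb
  constructor
  · apply tsum_eq_sum
    intro n hn
    have hact := hN x hxb n (by simpa [Finset.mem_range, not_lt] using hn)
    have : P.SS n x = 0 := by
      by_contra h0; exact hact (P.SS_ne h0)
    rw [this, zero_smul]
  · intro v
    apply tsum_eq_sum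
    intro n hn
    have hact := hN x hxb n (by simpa [Finset.mem_range, not_lt] using hn)
    have : P.DS n x v = 0 := by
      by_contra h0; exact hact (P.DS_ne h0)
    rw [this, zero_smul]

lemma cont_Phi : Continuous P.Phi := by
  rw [continuous_iff_continuousAt]
  intro x₀
  by_cases hx : x₀ = 0
  · subst hx
    rw [ContinuousAt, P.Phi_zero]
    apply squeeze_zero_norm (P.Phi_norm_le)
    have : Tendsto (fun x : H => ‖x‖) (nhds 0) (nhds 0) := by
      simpa using (continuous_norm.tendsto (0:H))
    simpa using this.const_mul (2 * P.Ku)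
  · obtain ⟨N, hev⟩ := P.eventually_finite_rep hx
    have hc : ContinuousAt (fun x : H => ∑ n ∈ Finset.range N, P.SS n x • P.w n) x₀ :=
      (continuous_finset_sum _ fun n _ =>
        ((P.SS_contDiff n).continuous).smul continuous_const).continuousAt
    exact hc.congr (hev.mono fun x h => h.1.symm)

lemma contDiffOn_Phi : ContDiffOn ℝ (⊤:ℕ∞) P.Phi {(0:H)}ᶜ := by
  intro x₀ hx₀
  have hx : x₀ ≠ 0 := hx₀
  obtain ⟨N, hev⟩ := P.eventually_finite_rep hx
  have hc : ContDiffAt ℝ (⊤:ℕ∞) (fun x : H => ∑ n ∈ Finset.range N, P.SS n x • P.w n) x₀ :=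
    (ContDiff.sum fun n _ => ((P.SS_contDiff n).smul contDiff_const)).contDiffAt
  exact (hc.congr_of_eventuallyEq (hev.mono fun x h => h.1)).contDiffWithinAt

lemma hasDerivAt_Phi_line (x v : H) (t₀ : ℝ) :
    HasDerivAt (fun t : ℝ => P.Phi (x + t • v)) (P.Psi (x + t₀ • v) v) t₀ := by
  by_cases hx0 : x + t₀ • v = 0
  · -- the line passes through the origin at t₀
    have hx' : ∀ t : ℝ, x + t • v = (t - t₀) • v := by
      intro t
      have hxeq : x = -(t₀ • v) := eq_neg_of_add_eq_zero_left hx0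
      rw [hxeq, sub_smul]; abel
    rw [hx0, P.Psi_zero_left]
    simp only [hx']
    rw [hasDerivAt_iff_isLittleO]
    have h00 : ((t₀:ℝ) - t₀) • v = 0 := by simp
    rw [Asymptotics.isLittleO_iff]
    intro c hc
    by_cases hv : v = 0
    · filter_upwards with t
      simp [hv, P.Phi_zero, smul_zero]
      positivity
    · have hnv : (0:ℝ) < ‖v‖ := norm_pos_iff.2 hv
      set ε := c / (2 * P.Ku + 1) with hεdef
      have hεpos : 0 < ε := by
        have := P.Ku_nonneg; positivity
      obtain ⟨N, hN⟩ := (Metric.tendsto_atTop).1 (P.inner_tendsto v) ε hεpos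
      have hδpos : 0 < aa N / (2 * ‖v‖) := by
        have := aa_pos N; positivity
      have hev : ∀ᶠ t : ℝ in nhds t₀, dist t t₀ < aa N / (2 * ‖v‖) := by
        filter_upwards [Metric.ball_mem_nhds t₀ hδpos] with t ht
        exact mem_ball.1 ht
      filter_upwards [hev] with t ht
      simp only [h00, P.Phi_zero, sub_zero, smul_zero, sub_zero]
      obtain ⟨n, hn⟩ := P.exists_good ((t - t₀) • v)
      rw [P.Phi_eq_single hn]
      by_cases hS : P.SS n ((t - t₀) • v) = 0
      · rw [hS, zero_smul, norm_zero]
        positivity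
      · have hact := P.SS_ne hS
        have h1 : aa n / 2 ≤ (t - t₀) * (inner ℝ v (P.e n) : ℝ) := by
          have := hact.1
          rwa [real_inner_smul_left] at this
        have h2 : aa n ≤ 2 * |t - t₀| * |(inner ℝ v (P.e n) : ℝ)| := by
          have : (t - t₀) * (inner ℝ v (P.e n) : ℝ) ≤ |t - t₀| * |(inner ℝ v (P.e n) : ℝ)| := by
            rw [← abs_mul]; exact le_abs_self _
          linarith
        have h3 : aa n < aa N := by
          have hvn : |(inner ℝ v (P.e n) : ℝ)| ≤ ‖v‖ := P.abs_inner_e_le n v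
          have ht' : |t - t₀| < aa N / (2 * ‖v‖) := by
            rwa [Real.dist_eq] at ht
          calc aa n ≤ 2 * |t - t₀| * |(inner ℝ v (P.e n) : ℝ)| := h2
            _ ≤ 2 * |t - t₀| * ‖v‖ := by
                apply mul_le_mul_of_nonneg_left hvn
                positivity
            _ < 2 * (aa N / (2 * ‖v‖)) * ‖v‖ := by
                apply mul_lt_mul_of_pos_right _ hnv
                linarith [mul_lt_mul_of_pos_left ht' (show (0:ℝ) < 2 by norm_num)]
            _ = aa N := by field_simp
        have hnN : N ≤ n := by
          by_contra hcon
          push_neg at hcon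
          exact absurd (aa_anti hcon) (by linarith)
        have hvnε : |(inner ℝ v (P.e n) : ℝ)| < ε := by
          have := hN n hnN
          rwa [Real.dist_eq, sub_zero] at this
        calc ‖P.SS n ((t - t₀) • v) • P.w n‖
            ≤ |P.SS n ((t - t₀) • v)| := by
              rw [norm_smul, Real.norm_eq_abs]
              calc |P.SS n ((t - t₀) • v)| * ‖P.w n‖ ≤ |P.SS n ((t - t₀) • v)| * 1 :=
                    mul_le_mul_of_nonneg_left (P.hw n) (abs_nonneg _)
                _ = _ := mul_one _
          _ ≤ aa n * P.Ku := P.SS_abs_le n _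
          _ ≤ (2 * |t - t₀| * |(inner ℝ v (P.e n) : ℝ)|) * P.Ku :=
              mul_le_mul_of_nonneg_right h2 P.Ku_nonneg
          _ ≤ (2 * |t - t₀| * ε) * P.Ku := by
              apply mul_le_mul_of_nonneg_right _ P.Ku_nonneg
              apply mul_le_mul_of_nonneg_left hvnε.le
              positivity
          _ ≤ c * |t - t₀| := by
              have hKu := P.Ku_nonneg
              have habs := abs_nonneg (t - t₀)
              have hd : (2 * P.Ku) * (c / (2 * P.Ku + 1)) ≤ c := by
                calc (2 * P.Ku) * (c / (2 * P.Ku + 1)) = c * (2 * P.Ku / (2 * P.Ku + 1)) := by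
                      ring
                  _ ≤ c * 1 := by
                      apply mul_le_mul_of_nonneg_left _ hc.le
                      rw [div_le_one (by linarith)]
                      linarith
                  _ = c := mul_one c
              nlinarith
          _ = c * ‖t - t₀‖ := by rw [Real.norm_eq_abs]
  · -- away from the origin: locally a finite sum
    obtain ⟨N, hev⟩ := P.eventually_finite_rep hx0
    have hcont : Continuous fun t : ℝ => x + t • v :=
      continuous_const.add (continuous_id.smul continuous_const)
    have hev' : ∀ᶠ t : ℝ in nhds t₀,
        (P.Phi (x + t • v) = ∑ n ∈ Finset.range N, P.SS n (x + t • v) • P.w n) ∧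
        (∀ v', P.Psi (x + t • v) v' = ∑ n ∈ Finset.range N, P.DS n (x + t • v) v' • P.w n) :=
      (hcont.continuousAt (x := t₀)).eventually hev
    have hsum : HasDerivAt (fun t : ℝ => ∑ n ∈ Finset.range N, P.SS n (x + t • v) • P.w n)
        (∑ n ∈ Finset.range N, P.DS n (x + t₀ • v) v • P.w n) t₀ :=
      HasDerivAt.fun_sum fun n _ => (P.hasDerivAt_SS n x v t₀).smul_const (P.w n)
    have hval : P.Psi (x + t₀ • v) v = ∑ n ∈ Finset.range N, P.DS n (x + t₀ • v) v • P.w n :=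
      (hev.self_of_nhds).2 v
    rw [hval]
    exact hsum.congr_of_eventuallyEq (hev'.mono fun t ht => ht.1)

lemma cont_Psi : Continuous fun p : H × H => P.Psi p.1 p.2 := by
  rw [continuous_iff_continuousAt]
  rintro ⟨x₀, v₀⟩
  by_cases hx : x₀ = 0
  · subst hx
    rw [ContinuousAt]
    have h0 : P.Psi 0 v₀ = 0 := P.Psi_zero_left v₀
    rw [h0, Metric.tendsto_nhds]
    intro ε hε
    set M : ℝ := P.Ku' + 8 * P.Ku * Kchi + 1 with hM
    have hMpos : 0 < M := by
      have := P.Ku_nonneg; have := P.Ku'_nonneg; have := Kchi_nonneg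
      have h8 : 0 ≤ 8 * P.Ku * Kchi := by positivity
      positivity
    have hfrac : 0 < ε / (4 * M) := by positivity
    obtain ⟨N₁, hN₁⟩ := (Metric.tendsto_atTop).1 (P.inner_tendsto v₀) (ε / (4 * M)) hfrac
    have hpow : Tendsto (fun n : ℕ => (2:ℝ)⁻¹ ^ n * (‖v₀‖ + 1)) atTop (nhds 0) := by
      have := (tendsto_pow_atTop_nhds_zero_of_lt_one
        (by norm_num : (0:ℝ) ≤ 2⁻¹) (by norm_num : (2:ℝ)⁻¹ < 1)).mul_const (‖v₀‖ + 1)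
      simpa using this
    obtain ⟨N₂, hN₂⟩ := (Metric.tendsto_atTop).1 hpow (ε / (4 * M)) hfrac
    set N := max N₁ N₂ with hN
    set δ : ℝ := min (aa N / 2) (min 1 (ε / (4 * M))) with hδ
    have hδpos : 0 < δ := by
      have := aa_pos N
      apply lt_min (by linarith) (lt_min one_pos hfrac)
    have hball : ∀ᶠ p : H × H in nhds (0, v₀), dist p (0, v₀) < δ := by
      filter_upwards [Metric.ball_mem_nhds _ hδpos] with p hp
      exact mem_ball.1 hp
    filter_upwards [hball] with p hp
    obtain ⟨x, v⟩ := p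
    have hdx : ‖x‖ < δ := by
      have := (max_lt_iff.1 (by rwa [Prod.dist_eq] at hp)).1
      simpa [dist_eq_norm] using this
    have hdv : ‖v - v₀‖ < δ := by
      have := (max_lt_iff.1 (by rwa [Prod.dist_eq] at hp)).2
      simpa [dist_eq_norm] using this
    obtain ⟨n, hn⟩ := P.exists_good x
    rw [P.Psi_eq_single hn, dist_zero_right]
    by_cases hD : P.DS n x v = 0
    · rw [hD, zero_smul, norm_zero]; exact hε
    · have hact : P.Act n x := P.DS_ne hD
      have haN : aa n < aa N := by
        have h1 := (P.act_norm hact).1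
        have h2 : δ ≤ aa N / 2 := min_le_left _ _
        linarith
      have hnN : N ≤ n := by
        by_contra hcon
        push_neg at hcon
        exact absurd (aa_anti hcon) (by linarith)
      have hvn : |(inner ℝ v (P.e n) : ℝ)| < 2 * (ε / (4 * M)) := by
        have hsplit : |(inner ℝ v (P.e n) : ℝ)|
            ≤ |(inner ℝ v₀ (P.e n) : ℝ)| + |(inner ℝ (v - v₀) (P.e n) : ℝ)| := by
          have : (inner ℝ v (P.e n) : ℝ) = inner ℝ v₀ (P.e n) + inner ℝ (v - v₀) (P.e n) := by
            rw [← inner_add_left]; congr 1; abel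
          rw [this]; exact abs_add_le _ _
        have hv0 : |(inner ℝ v₀ (P.e n) : ℝ)| < ε / (4 * M) := by
          have := hN₁ n (le_trans (le_max_left _ _) hnN)
          rwa [Real.dist_eq, sub_zero] at this
        have hvv0 : |(inner ℝ (v - v₀) (P.e n) : ℝ)| < ε / (4 * M) := by
          calc |(inner ℝ (v - v₀) (P.e n) : ℝ)| ≤ ‖v - v₀‖ := P.abs_inner_e_le n _
            _ < δ := hdv
            _ ≤ ε / (4 * M) := le_trans (min_le_right _ _) (min_le_right _ _)
        linarith
      have hnv : ‖v‖ ≤ ‖v₀‖ + 1 := by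
        have : ‖v‖ - ‖v₀‖ ≤ ‖v - v₀‖ := by
          have := norm_sub_norm_le v v₀; linarith
        have hδ1 : δ ≤ 1 := le_trans (min_le_right _ _) (min_le_left _ _)
        linarith
      have hpown : (2:ℝ)⁻¹ ^ n * (‖v₀‖ + 1) < ε / (4 * M) := by
        have := hN₂ n (le_trans (le_max_right _ _) hnN)
        rw [Real.dist_eq, sub_zero, abs_of_nonneg (by positivity)] at this
        exact this
      calc ‖P.DS n x v • P.w n‖ ≤ |P.DS n x v| := by
            rw [norm_smul, Real.norm_eq_abs]
            calc |P.DS n x v| * ‖P.w n‖ ≤ |P.DS n x v| * 1 :=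
                  mul_le_mul_of_nonneg_left (P.hw n) (abs_nonneg _)
              _ = _ := mul_one _
        _ ≤ P.Ku' * |(inner ℝ v (P.e n) : ℝ)| + 8 * P.Ku * Kchi * (2:ℝ)⁻¹ ^ n * ‖v‖ :=
            P.DS_abs_le hact
        _ < ε := by
          have b1 : P.Ku' * |(inner ℝ v (P.e n) : ℝ)| ≤ M * (2 * (ε / (4 * M))) := by
            have hKu' := P.Ku'_nonneg
            have hMM : P.Ku' ≤ M := by
              have := P.Ku_nonneg; have := Kchi_nonneg
              have h8 : 0 ≤ 8 * P.Ku * Kchi := by positivity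
              rw [hM]; linarith
            have habs := abs_nonneg (inner ℝ v (P.e n) : ℝ)
            nlinarith
          have b2 : 8 * P.Ku * Kchi * (2:ℝ)⁻¹ ^ n * ‖v‖ ≤ M * (ε / (4 * M)) := by
            have hKu := P.Ku_nonneg; have hKc := Kchi_nonneg
            have h8 : (0:ℝ) ≤ 8 * P.Ku * Kchi := by positivity
            have hMM : 8 * P.Ku * Kchi ≤ M := by
              have := P.Ku'_nonneg; rw [hM]; linarith
            have hpw : (0:ℝ) ≤ (2:ℝ)⁻¹ ^ n := by positivity
            have step : (2:ℝ)⁻¹ ^ n * ‖v‖ ≤ (2:ℝ)⁻¹ ^ n * (‖v₀‖ + 1) :=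
              mul_le_mul_of_nonneg_left hnv hpw
            have hnn : (0:ℝ) ≤ ‖v‖ := norm_nonneg v
            nlinarith [mul_le_mul_of_nonneg_left (le_of_lt hpown) h8,
              mul_le_mul_of_nonneg_right hMM (mul_nonneg hpw hnn)]
          have hMe : M * (2 * (ε / (4 * M))) = ε / 2 := by
            field_simp; ring
          have hMe2 : M * (ε / (4 * M)) = ε / 4 := by
            field_simp
          rw [hMe] at b1
          rw [hMe2] at b2
          linarith
  · obtain ⟨N, hev⟩ := P.eventually_finite_rep hx
    have hev' : ∀ᶠ p : H × H in nhds (x₀, v₀),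
        P.Psi p.1 p.2 = ∑ n ∈ Finset.range N, P.DS n p.1 p.2 • P.w n := by
      have hfst : Tendsto (fun p : H × H => p.1) (nhds (x₀, v₀)) (nhds x₀) :=
        continuous_fst.continuousAt
      filter_upwards [hfst.eventually hev] with p hp
      exact hp.2 p.2
    have hc : ContinuousAt (fun p : H × H => ∑ n ∈ Finset.range N, P.DS n p.1 p.2 • P.w n)
        (x₀, v₀) :=
      (continuous_finset_sum _ fun n _ => (P.DS_cont n).smul continuous_const).continuousAt
    exact hc.congr (hev'.mono fun p hp => hp.symm)

-- ### assembly
lemma dirDeriv_zero (G : H → H) (x v : H) : dirDeriv G 0 x v = G x := by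
  unfold dirDeriv
  rw [iteratedDeriv_zero]
  simp

lemma dirDeriv_one_Phi (x v : H) : dirDeriv P.Phi 1 x v = P.Psi x v := by
  unfold dirDeriv
  rw [iteratedDeriv_one]
  have h := (P.hasDerivAt_Phi_line x v 0).deriv
  simpa using h

lemma cmstar_Phi : CmStar 1 Set.univ P.Phi := by
  refine ⟨P.cont_Phi.continuousOn, ?_, ?_⟩
  · intro x v j hj t _
    interval_cases j
    rw [iteratedDeriv_zero]
    exact (P.hasDerivAt_Phi_line x v t).differentiableAt
  · intro j hj
    interval_cases j
    · apply Continuous.continuousOn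
      have heq : (fun p : H × H => dirDeriv P.Phi 0 p.1 p.2) = fun p => P.Phi p.1 := by
        funext p; exact dirDeriv_zero _ _ _
      rw [heq]
      exact P.cont_Phi.comp continuous_fst
    · apply Continuous.continuousOn
      have heq : (fun p : H × H => dirDeriv P.Phi 1 p.1 p.2) = fun p => P.Psi p.1 p.2 := by
        funext p; exact P.dirDeriv_one_Phi _ _
      rw [heq]
      exact P.cont_Psi

/-- The map for part (ii). -/
def Fmap (x : H) : H := x - P.Phi x

lemma cont_F : Continuous P.Fmap := continuous_id.sub P.cont_Phi

lemma hasDerivAt_F_line (x v : H) (t₀ : ℝ) :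
    HasDerivAt (fun t : ℝ => P.Fmap (x + t • v)) (v - P.Psi (x + t₀ • v) v) t₀ := by
  have hid : HasDerivAt (fun t : ℝ => x + t • v) v t₀ := by
    simpa using ((hasDerivAt_id t₀).smul_const v).const_add x
  exact hid.sub (P.hasDerivAt_Phi_line x v t₀)

lemma dirDeriv_one_F (x v : H) : dirDeriv P.Fmap 1 x v = v - P.Psi x v := by
  unfold dirDeriv
  rw [iteratedDeriv_one]
  have h := (P.hasDerivAt_F_line x v 0).deriv
  simpa using h

lemma cmstar_F : CmStar 1 Set.univ P.Fmap := by
  refine ⟨P.cont_F.continuousOn, ?_, ?_⟩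
  · intro x v j hj t _
    interval_cases j
    rw [iteratedDeriv_zero]
    exact (P.hasDerivAt_F_line x v t).differentiableAt
  · intro j hj
    interval_cases j
    · apply Continuous.continuousOn
      have heq : (fun p : H × H => dirDeriv P.Fmap 0 p.1 p.2) = fun p => P.Fmap p.1 := by
        funext p; exact dirDeriv_zero _ _ _
      rw [heq]
      exact P.cont_F.comp continuous_fst
    · apply Continuous.continuousOn
      have heq : (fun p : H × H => dirDeriv P.Fmap 1 p.1 p.2)
          = fun p => p.2 - P.Psi p.1 p.2 := by
        funext p; exact P.dirDeriv_one_F _ _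
      rw [heq]
      exact continuous_snd.sub P.cont_Psi

lemma dirDeriv_one_F_zero (v : H) : dirDeriv P.Fmap 1 0 v = v := by
  rw [P.dirDeriv_one_F, P.Psi_zero_left, sub_zero]

/-- values on the `n`-th axis -/
lemma Phi_on_axis (n : ℕ) (t : ℝ) :
    P.Phi (t • P.e n) = P.SS n (t • P.e n) • P.w n := by
  apply tsum_eq_single
  intro m hm
  have hinner : (inner ℝ (t • P.e n) (P.e m) : ℝ) = 0 := by
    rw [real_inner_smul_left, P.he.2 (Ne.symm hm), mul_zero]
  have : P.SS m (t • P.e n) = 0 := by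
    unfold SS
    rw [hinner, zero_div, P.u_zero_zero]
    ring
  rw [this, zero_smul]

lemma SS_on_axis (n : ℕ) (t : ℝ) :
    P.SS n (t • P.e n) = aa n * P.u (t / aa n) * chi (t ^ 2 / RR n ^ 2) := by
  unfold SS
  rw [real_inner_smul_left, real_inner_self_eq_norm_sq, P.norm_e, norm_smul, P.norm_e]
  simp [sq_abs]

lemma SS_at_center (n : ℕ) (hu1 : P.u 1 = 1) : P.SS n (aa n • P.e n) = aa n := by
  rw [P.SS_on_axis]
  have ha := aa_pos n
  rw [div_self ha.ne', hu1]
  have hc : chi (aa n ^ 2 / RR n ^ 2) = 1 := by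
    apply chi_one
    rw [abs_of_nonneg (by have := RR_pos n; positivity)]
    rw [div_le_one (by have := RR_pos n; positivity)]
    nlinarith [aa_le_RR n, aa_pos n, RR_pos n]
  rw [hc]; ring

/-- Part (i): the map `Phi` is not Fréchet differentiable at `0`
(for the setup with `w n = e 0`). -/
lemma not_differentiableAt [CompleteSpace H] (hu1 : P.u 1 = 1)
    (hwc : ∀ n, P.w n = P.e 0) : ¬ DifferentiableAt ℝ P.Phi 0 := by
  intro hdiff
  have hF := hdiff.hasFDerivAt
  set f' := fderiv ℝ P.Phi 0 with hf'
  rw [hasFDerivAt_iff_isLittleO_nhds_zero] at hF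
  have hseq : Tendsto (fun n => aa n • P.e n) atTop (nhds (0:H)) := by
    rw [tendsto_zero_iff_norm_tendsto_zero]
    have : (fun n => ‖aa n • P.e n‖) = aa := by
      funext n
      rw [norm_smul, P.norm_e, mul_one, Real.norm_eq_abs, abs_of_pos (aa_pos n)]
    rw [this]
    exact aa_tendsto
  have hcomp := hF.comp_tendsto hseq
  rw [Asymptotics.isLittleO_iff] at hcomp
  have key : Tendsto (fun n => f' (P.e n)) atTop (nhds (P.e 0)) := by
    rw [Metric.tendsto_atTop]
    intro ε hε
    obtain ⟨N, hN⟩ := eventually_atTop.1 (hcomp (half_pos hε))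
    refine ⟨N, fun n hn => ?_⟩
    have h1 := hN n hn
    simp only [Function.comp] at h1
    have hPhin : P.Phi (aa n • P.e n) = aa n • P.e 0 := by
      rw [P.Phi_on_axis, P.SS_at_center n hu1, hwc]
    rw [zero_add, hPhin, P.Phi_zero, sub_zero, map_smul] at h1
    have h2 : ‖aa n • P.e 0 - aa n • f' (P.e n)‖ = aa n * ‖P.e 0 - f' (P.e n)‖ := by
      rw [← smul_sub, norm_smul, Real.norm_eq_abs, abs_of_pos (aa_pos n)]
    have h3 : ‖aa n • P.e n‖ = aa n := by
      rw [norm_smul, P.norm_e, mul_one, Real.norm_eq_abs, abs_of_pos (aa_pos n)]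
    rw [h2, h3] at h1
    have h4 : ‖P.e 0 - f' (P.e n)‖ ≤ ε / 2 := by
      have hpos := aa_pos n
      have h1' : aa n * ‖P.e 0 - f' (P.e n)‖ ≤ aa n * (ε / 2) := by linarith
      exact le_of_mul_le_mul_left h1' hpos
    rw [dist_eq_norm, ← norm_sub_rev]
    linarith [h4, half_lt_self hε]
  -- contradiction via the adjoint
  have hlim1 : Tendsto (fun n => (inner ℝ (f' (P.e n)) (P.e 0) : ℝ)) atTop
      (nhds (inner ℝ (P.e 0) (P.e 0) : ℝ)) := key.inner tendsto_const_nhds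
  have hadj : ∀ n, (inner ℝ (f' (P.e n)) (P.e 0) : ℝ)
      = inner ℝ (P.e n) (ContinuousLinearMap.adjoint f' (P.e 0)) :=
    fun n => (ContinuousLinearMap.adjoint_inner_right f' (P.e n) (P.e 0)).symm
  have hlim2 : Tendsto (fun n => (inner ℝ (f' (P.e n)) (P.e 0) : ℝ)) atTop (nhds 0) := by
    rw [funext hadj]
    have h := P.inner_tendsto (ContinuousLinearMap.adjoint f' (P.e 0))
    have heq : (fun n => (inner ℝ (P.e n) (ContinuousLinearMap.adjoint f' (P.e 0)) : ℝ))
        = fun n => (inner ℝ (ContinuousLinearMap.adjoint f' (P.e 0)) (P.e n) : ℝ) := by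
      funext n; exact real_inner_comm _ _
    rw [heq]
    exact h
  have : (inner ℝ (P.e 0) (P.e 0) : ℝ) = 0 := tendsto_nhds_unique hlim1 hlim2
  rw [real_inner_self_eq_norm_sq, P.norm_e] at this
  norm_num at this

lemma F_not_locally_injective (P : Setup H) (hwe : P.w = P.e) (h1 : P.u 1 = 0)
    (h98 : P.u (9/8 : ℝ) = 1/4) (h32 : P.u (3/2 : ℝ) = 0) :
    ∀ W ∈ nhds (0 : H), ∃ x₁ ∈ W, ∃ x₂ ∈ W, x₁ ≠ x₂ ∧ P.Fmap x₁ = P.Fmap x₂ := by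
  intro W hW
  obtain ⟨r, hr, hball⟩ := Metric.mem_nhds_iff.1 hW
  obtain ⟨N, hN⟩ := (Metric.tendsto_atTop).1 aa_tendsto (r / 2) (by linarith)
  have haN : aa N < r / 2 := by
    have := hN N le_rfl
    rwa [Real.dist_eq, sub_zero, abs_of_pos (aa_pos N)] at this
  set n := N
  have ha := aa_pos n
  set fn : ℝ → ℝ := fun t => t - P.SS n (t • P.e n) with hfn
  have hFax : ∀ t : ℝ, P.Fmap (t • P.e n) = fn t • P.e n := by
    intro t
    show t • P.e n - P.Phi (t • P.e n) = _
    rw [P.Phi_on_axis n t, hwe, ← sub_smul]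
  have hcont : Continuous fn :=
    continuous_id.sub ((P.SS_contDiff n).continuous.comp
      (continuous_id.smul continuous_const))
  have hchi1 : ∀ t : ℝ, |t| ≤ RR n → chi (t ^ 2 / RR n ^ 2) = 1 := by
    intro t ht
    apply chi_one
    have hR := RR_pos n
    rw [abs_of_nonneg (by positivity), div_le_one (by positivity)]
    nlinarith [abs_nonneg t, sq_abs t]
  have hRa : 32 * aa n ≤ RR n := RR_ge n
  have hval1 : fn (aa n) = aa n := by
    rw [hfn]
    simp only
    rw [P.SS_on_axis, div_self ha.ne', h1]
    ring
  have hval2 : fn (9/8 * aa n) = 7/8 * aa n := by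
    rw [hfn]
    simp only
    rw [P.SS_on_axis]
    have hdiv : (9/8 * aa n) / aa n = 9/8 := by field_simp
    have habs : |9/8 * aa n| ≤ RR n := by
      rw [abs_of_pos (by positivity)]; linarith
    rw [hdiv, h98, hchi1 _ habs]
    ring
  have hval3 : fn (3/2 * aa n) = 3/2 * aa n := by
    rw [hfn]
    simp only
    rw [P.SS_on_axis]
    have hdiv : (3/2 * aa n) / aa n = 3/2 := by field_simp
    rw [hdiv, h32]
    ring
  -- IVT on [9/8 aa n, 3/2 aa n]
  have hsub : Icc (fn (9/8 * aa n)) (fn (3/2 * aa n)) ⊆ fn '' Icc (9/8 * aa n) (3/2 * aa n) :=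
    intermediate_value_Icc (by linarith) hcont.continuousOn
  have hmem : aa n ∈ Icc (fn (9/8 * aa n)) (fn (3/2 * aa n)) := by
    rw [hval2, hval3]
    exact ⟨by linarith, by linarith⟩
  obtain ⟨t', ht'mem, ht'val⟩ := hsub hmem
  refine ⟨aa n • P.e n, ?_, t' • P.e n, ?_, ?_, ?_⟩
  · apply hball
    rw [mem_ball, dist_zero_right, norm_smul, P.norm_e, mul_one, Real.norm_eq_abs,
      abs_of_pos ha]
    linarith
  · apply hball
    rw [mem_ball, dist_zero_right, norm_smul, P.norm_e, mul_one, Real.norm_eq_abs,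
      abs_of_pos (by linarith [ht'mem.1] : (0:ℝ) < t')]
    have := ht'mem.2
    linarith
  · intro heq
    have : (aa n - t') • P.e n = 0 := by
      rw [sub_smul, heq, sub_self]
    rcases smul_eq_zero.1 this with h | h
    · have := ht'mem.1
      have : aa n = t' := by linarith [sub_eq_zero.1 h]
      linarith
    · have := P.norm_e n
      rw [h, norm_zero] at this
      norm_num at this
  · rw [hFax, hFax, hval1, ht'val]


end Setup

lemma exists_orthonormal_seq (H : Type*) [NormedAddCommGroup H] [InnerProductSpace ℝ H]
    [CompleteSpace H] (hinf : ¬FiniteDimensional ℝ H) :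
    ∃ e : ℕ → H, Orthonormal ℝ e := by
  obtain ⟨wset, b, hb⟩ := exists_hilbertBasis ℝ H
  have horth : Orthonormal ℝ (fun i : wset => (i : H)) := by
    have := b.orthonormal
    rwa [hb] at this
  have hinfset : wset.Infinite := by
    by_contra hfin
    rw [Set.not_infinite] at hfin
    apply hinf
    have hdense := b.dense_span
    rw [hb] at hdense
    rw [Subtype.range_coe] at hdense
    have hfd : FiniteDimensional ℝ (Submodule.span ℝ wset) :=
      FiniteDimensional.span_of_finite ℝ hfin
    have hclosed : IsClosed ((Submodule.span ℝ wset : Submodule ℝ H) : Set H) :=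
      Submodule.closed_of_finiteDimensional _
    have htop : (Submodule.span ℝ wset).topologicalClosure = ⊤ := hdense
    rw [IsClosed.submodule_topologicalClosure_eq hclosed] at htop
    have : FiniteDimensional ℝ (⊤ : Submodule ℝ H) := htop ▸ hfd
    exact (Submodule.topEquiv : (⊤ : Submodule ℝ H) ≃ₗ[ℝ] H).finiteDimensional
  let emb := hinfset.natEmbedding
  exact ⟨fun n => (emb n : H), horth.comp emb emb.injective⟩

-- bump for part (i)
def rhoB : ContDiffBump (1:ℝ) := ⟨1/4, 1/2, by norm_num, by norm_num⟩
def rho : ℝ → ℝ := ⇑rhoB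

lemma rho_contDiff : ContDiff ℝ (⊤:ℕ∞) rho := rhoB.contDiff
lemma rho_supp : ∀ y : ℝ, y ∉ Icc (1/2 : ℝ) (3/2) → rho y = 0 := by
  intro y hy
  apply rhoB.zero_of_le_dist
  rw [Real.dist_eq, show rhoB.rOut = 1/2 from rfl]
  simp only [mem_Icc, not_and_or, not_le] at hy
  rcases hy with h | h
  · rw [abs_of_neg (by linarith)]; linarith
  · rw [abs_of_pos (by linarith)]; linarith
lemma rho_one : rho 1 = 1 :=
  rhoB.one_of_mem_closedBall
    (by rw [Metric.mem_closedBall, Real.dist_eq, show rhoB.rIn = 1/4 from rfl]; norm_num)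
lemma rho_le_one (y : ℝ) : |rho y| ≤ 1 := by
  unfold rho
  rw [abs_of_nonneg rhoB.nonneg]; exact rhoB.le_one
lemma rho_hcs : HasCompactSupport rho := rhoB.hasCompactSupport
lemma rho_deriv_bound : ∃ C : ℝ, ∀ q, |deriv rho q| ≤ C := by
  obtain ⟨C, hC⟩ := (rho_contDiff.continuous_deriv
    (by exact_mod_cast (le_top : (1:ℕ∞) ≤ ⊤))).bounded_above_of_compact_support rho_hcs.deriv
  exact ⟨C, by simpa using hC⟩

-- bump for part (ii) : u₂ y = 2(y-1)·γ(y), equals 2(y-1) on [7/8, 9/8]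
def gamB : ContDiffBump (1:ℝ) := ⟨1/8, 1/2, by norm_num, by norm_num⟩
def uu : ℝ → ℝ := fun y => 2 * (y - 1) * gamB y

lemma uu_contDiff : ContDiff ℝ (⊤:ℕ∞) uu :=
  (contDiff_const.mul (contDiff_id.sub contDiff_const)).mul gamB.contDiff
lemma uu_supp : ∀ y : ℝ, y ∉ Icc (1/2 : ℝ) (3/2) → uu y = 0 := by
  intro y hy
  have : gamB y = 0 := by
    apply gamB.zero_of_le_dist
    rw [Real.dist_eq, show gamB.rOut = 1/2 from rfl]
    simp only [mem_Icc, not_and_or, not_le] at hy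
    rcases hy with h | h
    · rw [abs_of_neg (by linarith)]; linarith
    · rw [abs_of_pos (by linarith)]; linarith
  unfold uu; rw [this, mul_zero]
lemma uu_le_one (y : ℝ) : |uu y| ≤ 1 := by
  by_cases h : gamB y = 0
  · unfold uu; rw [h, mul_zero, abs_zero]; norm_num
  · have hy : |y - 1| < 1/2 := by
      have := Function.mem_support.2 h
      rw [gamB.support_eq] at this
      simpa [Real.dist_eq, gamB] using this
    unfold uu
    rw [abs_mul]
    have h1 : |2 * (y - 1)| ≤ 1 := by
      rw [abs_mul, abs_of_pos (by norm_num : (0:ℝ) < 2)]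
      linarith
    have h2 : |(gamB y : ℝ)| ≤ 1 := by
      rw [abs_of_nonneg gamB.nonneg]; exact gamB.le_one
    calc |2 * (y - 1)| * |(gamB y : ℝ)| ≤ 1 * 1 :=
          mul_le_mul h1 h2 (abs_nonneg _) (by norm_num)
      _ = 1 := by norm_num
lemma uu_hcs : HasCompactSupport uu := by
  apply HasCompactSupport.mul_left (gamB.hasCompactSupport)
lemma uu_deriv_bound : ∃ C : ℝ, ∀ q, |deriv uu q| ≤ C := by
  obtain ⟨C, hC⟩ := (uu_contDiff.continuous_deriv
    (by exact_mod_cast (le_top : (1:ℕ∞) ≤ ⊤))).bounded_above_of_compact_support uu_hcs.deriv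
  exact ⟨C, by simpa using hC⟩
lemma uu_at_one : uu 1 = 0 := by unfold uu; ring
lemma uu_at_98 : uu (9/8 : ℝ) = 1/4 := by
  unfold uu
  have : gamB (9/8 : ℝ) = 1 :=
    gamB.one_of_mem_closedBall
      (by rw [Metric.mem_closedBall, Real.dist_eq, show gamB.rIn = 1/8 from rfl]
          norm_num [abs_le])
  rw [this]; norm_num
lemma uu_at_32 : uu (3/2 : ℝ) = 0 := by
  unfold uu
  have : gamB (3/2 : ℝ) = 0 := by
    apply gamB.zero_of_le_dist
    rw [Real.dist_eq, show gamB.rOut = 1/2 from rfl]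
    rw [show (3/2:ℝ) - 1 = 1/2 by norm_num, abs_of_pos] <;> norm_num
  rw [this]; ring


end CmStarAux

/-- On an infinite-dimensional separable real Hilbert space:
(i) there is a `C^1_*` map, smooth away from the origin, which is not Fréchet
differentiable at `0`; (ii) there is a `C^1_*` map whose directional derivative at `0` is
the identity but which is injective on no neighbourhood of `0` (failure of the inverse
function theorem in `C^1_*`). -/
theorem cmstar_frechet_failure {H : Type*} [NormedAddCommGroup H] [InnerProductSpace ℝ H]
    [CompleteSpace H] [TopologicalSpace.SeparableSpace H]
    (hinf : ¬FiniteDimensional ℝ H) :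
    (∃ G : H → H, CmStar 1 Set.univ G ∧ ContDiffOn ℝ (⊤ : ℕ∞) G {(0 : H)}ᶜ ∧
      ¬DifferentiableAt ℝ G 0) ∧
    ∃ F : H → H, CmStar 1 Set.univ F ∧ (∀ xdot : H, dirDeriv F 1 0 xdot = xdot) ∧
      ∀ W ∈ nhds (0 : H), ∃ x₁ ∈ W, ∃ x₂ ∈ W, x₁ ≠ x₂ ∧ F x₁ = F x₂ := by
  classical
  obtain ⟨e, he⟩ := CmStarAux.exists_orthonormal_seq H hinf
  constructor
  · -- part (i)
    obtain ⟨K1, hK1⟩ := CmStarAux.rho_deriv_bound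
    let P : CmStarAux.Setup H :=
      ⟨e, he, CmStarAux.rho, CmStarAux.rho_contDiff, CmStarAux.rho_supp, 1, K1,
        CmStarAux.rho_le_one, hK1, fun _ => e 0, fun _ => le_of_eq (he.1 0)⟩
    exact ⟨P.Phi, P.cmstar_Phi, P.contDiffOn_Phi,
      P.not_differentiableAt CmStarAux.rho_one (fun _ => rfl)⟩
  · -- part (ii)
    obtain ⟨K2, hK2⟩ := CmStarAux.uu_deriv_bound
    let Q : CmStarAux.Setup H :=
      ⟨e, he, CmStarAux.uu, CmStarAux.uu_contDiff, CmStarAux.uu_supp, 1, K2,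
        CmStarAux.uu_le_one, hK2, e, fun n => le_of_eq (he.1 n)⟩
    exact ⟨Q.Fmap, Q.cmstar_F, Q.dirDeriv_one_F_zero,
      Q.F_not_locally_injective rfl CmStarAux.uu_at_one CmStarAux.uu_at_98 CmStarAux.uu_at_32⟩

end
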